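/- Let ρ ∈ (0, 1/2], θ = arcsin√ρ, τ = ⌊π/(4θ)⌋, β = π/2 - 2τθ, φ = arccos(-tan β / tan 2θ), ψ = arccos(sin β / sin 2θ). In a 2-dimensional space with orthonormal basis {|u⟩, |g⟩} and |Y⟩ = sin θ|u⟩ + cos θ|g⟩, |N⟩ = cos θ|u⟩ - sin θ|g⟩, define D^φ = |u⟩⟨u| + e^{iφ}(I - |u⟩⟨u|), Ξ^ψ = e^{iψ}|Y⟩⟨Y| + |N⟩⟨N|. Then e^{i(π-ψ)} Ξ^{π+2ψ} D^{φ} (Ξ^π D^π)^τ |u⟩ = |g⟩. -/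

import Mathlib

open Real
open scoped InnerProductSpace

set_option maxHeartbeats 4000000 in
theorem stmt12 {H : Type*} [NormedAddCommGroup H] [InnerProductSpace ℂ H]
    (ρ : ℝ) (h0 : 0 < ρ) (h1 : ρ ≤ 1 / 2)
    (θ : ℝ) (hθ : θ = arcsin (Real.sqrt ρ))
    (τ : ℕ) (hτ : τ = ⌊π / (4 * θ)⌋₊)
    (β : ℝ) (hβ : β = π / 2 - 2 * τ * θ)
    (φ : ℝ) (hφ : φ = arccos (-tan β / tan (2 * θ)))
    (ψ : ℝ) (hψ : ψ = arccos (sin β / sin (2 * θ)))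
    (u g : H) (hu : ‖u‖ = 1) (hg : ‖g‖ = 1) (hug : ⟪u, g⟫_ℂ = 0)
    (hspan : Submodule.span ℂ {u, g} = ⊤)
    (Y N : H)
    (hY : Y = (Real.sin θ : ℂ) • u + (Real.cos θ : ℂ) • g)
    (hN : N = (Real.cos θ : ℂ) • u - (Real.sin θ : ℂ) • g)
    (Dφ Dπ Ξπ Ξψ : H →ₗ[ℂ] H)
    (hDφu : Dφ u = u) (hDφg : Dφ g = Complex.exp (φ * Complex.I) • g)
    (hDπu : Dπ u = u) (hDπg : Dπ g = -g)
    (hΞπN : Ξπ N = N) (hΞπY : Ξπ Y = -Y)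
    (hΞψN : Ξψ N = N) (hΞψY : Ξψ Y = Complex.exp ((π + 2 * ψ) * Complex.I) • Y) :
    Complex.exp ((π - ψ) * Complex.I) • Ξψ (Dφ (((Ξπ ∘ₗ Dπ) ^ τ) u)) = g := by
  have hπ := Real.pi_pos
  -- basic range facts for θ
  have hθ0 : 0 < θ := by rw [hθ]; exact Real.arcsin_pos.2 (Real.sqrt_pos.2 h0)
  have hθ4 : θ ≤ π / 4 := by
    have h2 : Real.sqrt ρ ≤ Real.sqrt 2 / 2 := by
      rw [show Real.sqrt 2 / 2 = Real.sqrt (1/2) by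
        rw [show (1/2:ℝ) = (Real.sqrt 2 / 2)^2 by
          rw [div_pow, Real.sq_sqrt (by norm_num : (0:ℝ) ≤ 2)]; norm_num,
          Real.sqrt_sq (by positivity)]]
      exact Real.sqrt_le_sqrt h1
    calc θ = arcsin (Real.sqrt ρ) := hθ
    _ ≤ arcsin (Real.sin (π/4)) :=
        Real.monotone_arcsin (by rw [Real.sin_pi_div_four]; exact h2)
    _ = π/4 := Real.arcsin_sin (by linarith) (by linarith)
  -- floor facts
  have hτle : (τ:ℝ) * (4*θ) ≤ π := by
    have h := Nat.floor_le (show (0:ℝ) ≤ π/(4*θ) by positivity)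
    rw [← hτ] at h
    have := mul_le_mul_of_nonneg_right h (show (0:ℝ) ≤ 4*θ by linarith)
    calc (τ:ℝ)*(4*θ) ≤ (π/(4*θ))*(4*θ) := this
    _ = π := by field_simp
  have hβ0 : 0 ≤ β := by rw [hβ]; push_cast; nlinarith
  have hβlt : β < 2*θ := by
    have h := Nat.lt_floor_add_one (π/(4*θ))
    rw [← hτ] at h
    have h2 : π < ((τ:ℝ)+1) * (4*θ) := by
      rw [← div_lt_iff₀ (by linarith : (0:ℝ) < 4*θ)]
      exact h
    rw [hβ]; push_cast; nlinarith
  -- positivity of trig values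
  have hsθ : 0 < Real.sin θ := Real.sin_pos_of_pos_of_lt_pi hθ0 (by linarith)
  have hcθ : 0 < Real.cos θ := Real.cos_pos_of_mem_Ioo ⟨by linarith, by linarith⟩
  have hcβ : 0 < Real.cos β := Real.cos_pos_of_mem_Ioo ⟨by linarith, by linarith⟩
  have hsβ0 : 0 ≤ Real.sin β := Real.sin_nonneg_of_nonneg_of_le_pi hβ0 (by linarith)
  have hs2 : Real.sin (2*θ) = 2*Real.sin θ*Real.cos θ := Real.sin_two_mul θ
  have hs2pos : (0:ℝ) < 2*Real.sin θ*Real.cos θ := by positivity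
  have hc2 : Real.cos (2*θ) = Real.cos θ^2 - Real.sin θ^2 := by
    have h1 := Real.cos_two_mul θ
    have h2 := Real.sin_sq_add_cos_sq θ
    linarith
  have hc20 : 0 ≤ Real.cos (2*θ) := Real.cos_nonneg_of_mem_Icc ⟨by linarith, by linarith⟩
  have hsβle : Real.sin β ≤ Real.sin (2*θ) :=
    Real.sin_le_sin_of_le_of_le_pi_div_two (by linarith) (by linarith) hβlt.le
  have hc2le : Real.cos (2*θ) ≤ Real.cos β :=
    Real.cos_le_cos_of_nonneg_of_le_pi hβ0 (by linarith) hβlt.le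
  -- values of cos/sin of ψ and φ
  have hsβle' : Real.sin β ≤ 2*Real.sin θ*Real.cos θ := by rw [← hs2]; exact hsβle
  have hne2 : Real.sin (2*θ) ≠ 0 := (hs2 ▸ hs2pos).ne'
  have hcψv : Real.cos ψ = Real.sin β / (2*Real.sin θ*Real.cos θ) := by
    have hb1 : (-1:ℝ) ≤ Real.sin β / Real.sin (2*θ) :=
      le_trans (by norm_num) (div_nonneg hsβ0 (hs2 ▸ hs2pos).le)
    have hb2 : Real.sin β / Real.sin (2*θ) ≤ 1 := (div_le_one (hs2 ▸ hs2pos)).2 hsβle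
    rw [hψ, Real.cos_arccos hb1 hb2, hs2]
  have hsψ2 : Real.sin ψ^2 = 1 - (Real.sin β / (2*Real.sin θ*Real.cos θ))^2 := by
    have h := Real.sin_sq_add_cos_sq ψ
    rw [hcψv] at h; linarith
  have hsψ0 : 0 ≤ Real.sin ψ := by rw [hψ, Real.sin_arccos]; positivity
  have hzeq : -Real.tan β / Real.tan (2*θ) =
      -(Real.sin β * Real.cos (2*θ)) / (Real.cos β * Real.sin (2*θ)) := by
    rw [Real.tan_eq_sin_div_cos, Real.tan_eq_sin_div_cos]
    rcases eq_or_ne (Real.cos (2*θ)) 0 with h | h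
    · rw [h]; simp
    · field_simp [hcβ.ne', h, hne2]
  have hnum_le : Real.sin β * Real.cos (2*θ) ≤ Real.cos β * Real.sin (2*θ) := by
    have h := mul_le_mul hsβle hc2le hc20 (hs2 ▸ hs2pos).le
    exact le_of_le_of_eq h (mul_comm _ _)
  have hz1 : -Real.tan β / Real.tan (2*θ) ≤ 1 := by
    rw [hzeq]
    have hd : 0 < Real.cos β * Real.sin (2*θ) := by rw [hs2]; positivity
    rw [div_le_one hd]
    linarith [mul_nonneg hsβ0 hc20]
  have hz2 : -1 ≤ -Real.tan β / Real.tan (2*θ) := by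
    rw [hzeq]
    have hd : 0 < Real.cos β * Real.sin (2*θ) := by rw [hs2]; positivity
    rw [le_div_iff₀ hd]
    linarith
  have hcφv : Real.cos φ =
      -(Real.sin β * (Real.cos θ^2 - Real.sin θ^2)) / (Real.cos β * (2*Real.sin θ*Real.cos θ)) := by
    rw [hφ, Real.cos_arccos hz2 hz1, hzeq, hc2, hs2]
  have hsφv : Real.sin φ = Real.sin ψ / Real.cos β := by
    rw [hφ, Real.sin_arccos, hψ, Real.sin_arccos]
    rw [show 1 - (-Real.tan β / Real.tan (2*θ))^2
        = (1 - (Real.sin β / Real.sin (2*θ))^2) / (Real.cos β)^2 from ?_]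
    · rw [Real.sqrt_div ?hnn, Real.sqrt_sq hcβ.le]
      case hnn =>
        have : (Real.sin β / Real.sin (2*θ))^2 ≤ 1 := by
          rw [sq_le_one_iff_abs_le_one, abs_div, abs_of_nonneg hsβ0,
            abs_of_pos (hs2 ▸ hs2pos), div_le_one (hs2 ▸ hs2pos)]
          exact hsβle
        linarith
    · rw [hzeq]
      have h1 := Real.sin_sq_add_cos_sq β
      have h2 := Real.sin_sq_add_cos_sq (2*θ)
      field_simp [hcβ.ne', hne2]
      linear_combination (Real.sin (2*θ)^2) * h1 -
        (Real.sin β^2) * h2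
  -- complex cast facts
  have hpcC : Complex.sin (θ:ℂ)^2 + Complex.cos (θ:ℂ)^2 = 1 := Complex.sin_sq_add_cos_sq _
  have hc2C : Complex.cos (2*(θ:ℂ)) = Complex.cos (θ:ℂ)^2 - Complex.sin (θ:ℂ)^2 := by
    exact_mod_cast congrArg (Complex.ofReal) hc2
  have hs2C : Complex.sin (2*(θ:ℂ)) = 2*Complex.sin (θ:ℂ)*Complex.cos (θ:ℂ) := by
    exact_mod_cast congrArg (Complex.ofReal) hs2
  -- u and g in terms of Y and N
  have hu2 : u = (Real.sin θ : ℂ) • Y + (Real.cos θ : ℂ) • N := by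
    rw [hY, hN]
    match_scalars
    all_goals push_cast
    all_goals first
    | ring1
    | linear_combination hpcC | linear_combination -hpcC
    | linear_combination 2*hpcC | linear_combination -2*hpcC
    | linear_combination hc2C | linear_combination -hc2C
    | linear_combination 2*hc2C | linear_combination -2*hc2C
    | linear_combination hs2C | linear_combination -hs2C
    | linear_combination 2*hs2C | linear_combination -2*hs2C
  have hg2 : g = (Real.cos θ : ℂ) • Y - (Real.sin θ : ℂ) • N := by
    rw [hY, hN]
    match_scalars
    all_goals push_cast
    all_goals first
    | ring1
    | linear_combination hpcC | linear_combination -hpcC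
    | linear_combination 2*hpcC | linear_combination -2*hpcC
    | linear_combination hc2C | linear_combination -hc2C
    | linear_combination 2*hc2C | linear_combination -2*hc2C
    | linear_combination hs2C | linear_combination -hs2C
    | linear_combination 2*hs2C | linear_combination -2*hs2C
  -- action of the Grover iterate on u and g
  have hGu : (Ξπ ∘ₗ Dπ) u = (Real.cos (2*θ):ℂ) • u - (Real.sin (2*θ):ℂ) • g := by
    rw [LinearMap.comp_apply, hDπu]
    conv_lhs => rw [hu2]
    rw [map_add, map_smul, map_smul, hΞπY, hΞπN, hY, hN]
    match_scalars
    all_goals push_cast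
    all_goals first
    | ring1
    | linear_combination hpcC | linear_combination -hpcC
    | linear_combination 2*hpcC | linear_combination -2*hpcC
    | linear_combination hc2C | linear_combination -hc2C
    | linear_combination 2*hc2C | linear_combination -2*hc2C
    | linear_combination hs2C | linear_combination -hs2C
    | linear_combination 2*hs2C | linear_combination -2*hs2C
  have hGg : (Ξπ ∘ₗ Dπ) g = (Real.sin (2*θ):ℂ) • u + (Real.cos (2*θ):ℂ) • g := by
    rw [LinearMap.comp_apply, hDπg, map_neg]
    conv_lhs => rw [hg2]
    rw [map_sub, map_smul, map_smul, hΞπY, hΞπN, hY, hN]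
    match_scalars
    all_goals push_cast
    all_goals first
    | ring1
    | linear_combination hpcC | linear_combination -hpcC
    | linear_combination 2*hpcC | linear_combination -2*hpcC
    | linear_combination hc2C | linear_combination -hc2C
    | linear_combination 2*hc2C | linear_combination -2*hc2C
    | linear_combination hs2C | linear_combination -hs2C
    | linear_combination 2*hs2C | linear_combination -2*hs2C
  -- the Grover iterate is rotation by 2θ
  have key : ∀ k:ℕ, ((Ξπ ∘ₗ Dπ)^k) u
      = (Real.cos (2*k*θ):ℂ) • u - (Real.sin (2*k*θ):ℂ) • g := by
    intro k
    induction k with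
    | zero => norm_num
    | succ n ih =>
      have e1 : ((2:ℝ)*((n:ℕ)+1:ℕ)*θ) = 2*(n:ℝ)*θ + 2*θ := by push_cast; ring
      rw [pow_succ', Module.End.mul_apply, ih, map_sub, map_smul, map_smul, hGu, hGg,
        e1, Real.cos_add, Real.sin_add]
      match_scalars
      · push_cast; ring
      · push_cast; ring
  -- evaluate at τ
  have htrig1 : Real.cos (2*(τ:ℝ)*θ) = Real.sin β := by
    rw [show 2*(τ:ℝ)*θ = π/2 - β by rw [hβ]; ring, Real.cos_pi_div_two_sub]
  have htrig2 : Real.sin (2*(τ:ℝ)*θ) = Real.cos β := by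
    rw [show 2*(τ:ℝ)*θ = π/2 - β by rw [hβ]; ring, Real.sin_pi_div_two_sub]
  -- action of Ξψ on u and g
  have hΞψu : Ξψ u = ((Real.sin θ:ℂ) * Complex.exp ((↑π + 2*↑ψ) * Complex.I)) • Y
      + (Real.cos θ:ℂ) • N := by
    conv_lhs => rw [hu2]
    rw [map_add, map_smul, map_smul, hΞψY, hΞψN, smul_smul]
  have hΞψg : Ξψ g = ((Real.cos θ:ℂ) * Complex.exp ((↑π + 2*↑ψ) * Complex.I)) • Y
      - (Real.sin θ:ℂ) • N := by
    conv_lhs => rw [hg2]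
    rw [map_sub, map_smul, map_smul, hΞψY, hΞψN, smul_smul]
  -- exponential identities
  have he1 : Complex.exp ((↑π + 2*↑ψ) * Complex.I)
      = -(Complex.exp ((ψ:ℂ) * Complex.I) * Complex.exp ((ψ:ℂ) * Complex.I)) := by
    rw [show ((π:ℂ) + 2*(ψ:ℂ)) * Complex.I
        = ↑π*Complex.I + ((ψ:ℂ)*Complex.I + (ψ:ℂ)*Complex.I) by ring,
      Complex.exp_add, Complex.exp_add, Complex.exp_pi_mul_I]
    ring
  have hE2 : Complex.exp ((↑π - ↑ψ) * Complex.I) * Complex.exp ((ψ:ℂ) * Complex.I) = -1 := by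
    rw [← Complex.exp_add, show ((π:ℂ)-(ψ:ℂ))*Complex.I + (ψ:ℂ)*Complex.I
        = ↑π * Complex.I by ring, Complex.exp_pi_mul_I]
  -- the two key complex identities
  have keyA : (Complex.sin (β:ℂ)*Complex.sin (θ:ℂ)
        - Complex.exp ((φ:ℂ) * Complex.I)*(Complex.cos (β:ℂ)*Complex.cos (θ:ℂ)))
      * Complex.exp ((ψ:ℂ) * Complex.I) = Complex.cos (θ:ℂ) := by
    rw [Complex.exp_mul_I, Complex.exp_mul_I,
      ← Complex.ofReal_sin β, ← Complex.ofReal_sin θ, ← Complex.ofReal_cos β,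
      ← Complex.ofReal_cos θ, ← Complex.ofReal_cos φ, ← Complex.ofReal_sin φ,
      ← Complex.ofReal_cos ψ, ← Complex.ofReal_sin ψ]
    apply Complex.ext <;>
      simp only [Complex.add_re, Complex.add_im, Complex.sub_re, Complex.sub_im,
        Complex.mul_re, Complex.mul_im, Complex.I_re, Complex.I_im,
        Complex.ofReal_re, Complex.ofReal_im]
    · rw [hcφv, hsφv, hcψv]
      have hpθ := Real.sin_sq_add_cos_sq θ
      have hsψ2' : (2*Real.sin θ*Real.cos θ)^2 * Real.sin ψ^2
          = (2*Real.sin θ*Real.cos θ)^2 - Real.sin β^2 := by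
        rw [hsψ2]; field_simp
      field_simp
      first
      | linear_combination (Real.cos β^2*Real.cos θ)*hsψ2'
          + (Real.sin β^2*Real.cos β^2*Real.cos θ)*hpθ
      | linear_combination (Real.cos β*Real.cos θ)*hsψ2'
          + (Real.cos β*Real.cos θ*Real.sin β^2)*hpθ
    · rw [hcφv, hsφv, hcψv]
      have hpθ := Real.sin_sq_add_cos_sq θ
      field_simp
      first
      | linear_combination (Real.sin β*Real.cos β*Real.cos θ*Real.sin ψ)*hpθ
      | linear_combination (Real.sin β*Real.cos β*Real.sin ψ*(2*Real.sin θ*Real.cos θ^2))*hpθ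
  have keyB : Complex.sin (β:ℂ)*Complex.cos (θ:ℂ)
        + Complex.exp ((φ:ℂ) * Complex.I)*(Complex.cos (β:ℂ)*Complex.sin (θ:ℂ))
      = Complex.exp ((ψ:ℂ) * Complex.I) * Complex.sin (θ:ℂ) := by
    rw [Complex.exp_mul_I, Complex.exp_mul_I,
      ← Complex.ofReal_sin β, ← Complex.ofReal_sin θ, ← Complex.ofReal_cos β,
      ← Complex.ofReal_cos θ, ← Complex.ofReal_cos φ, ← Complex.ofReal_sin φ,
      ← Complex.ofReal_cos ψ, ← Complex.ofReal_sin ψ]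
    apply Complex.ext <;>
      simp only [Complex.add_re, Complex.add_im, Complex.sub_re, Complex.sub_im,
        Complex.mul_re, Complex.mul_im, Complex.I_re, Complex.I_im,
        Complex.ofReal_re, Complex.ofReal_im]
    · rw [hcφv, hsφv, hcψv]
      have hpθ := Real.sin_sq_add_cos_sq θ
      field_simp
      first
      | linear_combination (2*Real.sin β*Real.cos θ*Real.cos β*Real.sin θ^2)*hpθ
      | linear_combination (Real.sin β*Real.cos β*Real.sin θ)*hpθ
    · rw [hcφv, hsφv, hcψv]
      have hpθ := Real.sin_sq_add_cos_sq θ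
      field_simp
      ring
  -- final assembly
  rw [key τ, htrig1, htrig2, map_sub, map_smul, map_smul, hDφu, hDφg,
    map_sub, map_smul, map_smul, map_smul, hΞψu, hΞψg, hY, hN]
  match_scalars
  · rw [he1]
    push_cast
    linear_combination (-(Complex.exp ((↑π - ↑ψ) * Complex.I)*Complex.sin (θ:ℂ)
        *Complex.exp ((ψ:ℂ) * Complex.I))) * keyA
      + (Complex.exp ((↑π - ↑ψ) * Complex.I)*Complex.cos (θ:ℂ)) * keyB
  · rw [he1]
    push_cast
    linear_combination (-(Complex.exp ((↑π - ↑ψ) * Complex.I)*Complex.cos (θ:ℂ)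
        *Complex.exp ((ψ:ℂ) * Complex.I))) * keyA
      - (Complex.exp ((↑π - ↑ψ) * Complex.I)*Complex.sin (θ:ℂ)) * keyB
      - hE2
      - (Complex.exp ((↑π - ↑ψ) * Complex.I)*Complex.exp ((ψ:ℂ) * Complex.I)) * hpcC
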